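/- If v, w ∈ [0,1]^N satisfy v ≼ w (i.e., v_i ≤ w_i for all i), then for every assortment S ⊆ [N] it holds that R(S, w) − R(S, v) ≤ Σ_{i∈S} (w_i − v_i). -/

import Mathlib

/-- The expected reward `R(S, v)` of an assortment `S`. -/
noncomputable def Rew {N : ℕ} (r v : Fin N → ℝ) (S : Finset (Fin N)) : ℝ :=
  (∑ i ∈ S, r i * v i) / (1 + ∑ i ∈ S, v i)

/-- If `v ≼ w` componentwise, then `R(S, w) − R(S, v) ≤ Σ_{i∈S} (w_i − v_i)`. -/
theorem stmt5 (N : ℕ) (r v w : Fin N → ℝ)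
    (hr : ∀ i, 0 < r i ∧ r i ≤ 1) (hv : ∀ i, 0 ≤ v i ∧ v i ≤ 1)
    (hw : ∀ i, 0 ≤ w i ∧ w i ≤ 1) (hvw : ∀ i, v i ≤ w i)
    (S : Finset (Fin N)) :
    Rew r w S - Rew r v S ≤ ∑ i ∈ S, (w i - v i) := by
  unfold Rew
  set A := ∑ i ∈ S, r i * w i with hA
  set C := ∑ i ∈ S, r i * v i with hCdef
  set sw := ∑ i ∈ S, w i with hsw'
  set sv := ∑ i ∈ S, v i with hsv'
  have hsv : 0 ≤ sv := Finset.sum_nonneg fun i _ => (hv i).1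
  have hswv : sv ≤ sw := Finset.sum_le_sum fun i _ => hvw i
  have hC : 0 ≤ C := Finset.sum_nonneg fun i _ => mul_nonneg (hr i).1.le (hv i).1
  have hAC : A - C ≤ sw - sv := by
    rw [hA, hCdef, hsw', hsv', ← Finset.sum_sub_distrib, ← Finset.sum_sub_distrib]
    refine Finset.sum_le_sum fun i _ => ?_
    have : r i * w i - r i * v i = r i * (w i - v i) := by ring
    rw [this]
    nlinarith [(hr i).1, (hr i).2, hvw i]
  have hD : (0:ℝ) < 1 + sv := by linarith
  have hB : (0:ℝ) < 1 + sw := by linarith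
  have hsum : ∑ i ∈ S, (w i - v i) = sw - sv := by
    rw [hsw', hsv', ← Finset.sum_sub_distrib]
  rw [hsum, div_sub_div _ _ (ne_of_gt hB) (ne_of_gt hD), div_le_iff₀ (by positivity)]
  nlinarith [mul_nonneg hC (sub_nonneg.2 hswv),
    mul_le_mul_of_nonneg_right hAC hD.le,
    mul_nonneg (mul_nonneg (sub_nonneg.2 hswv) hD.le) (Finset.sum_nonneg fun i (_ : i ∈ S) => (hw i).1)]
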